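/- arXiv:1210.7908 — 2 statements merged into one kernel-verified Lean document; each statement's English description precedes it below -/
import Mathlib

section
/- There exists a constant λ₀ > 0 such that the following holds for every real λ with 0 < λ ≤ λ₀ (Lemma about powers): suppose G = ⟨X | R⟩ is a presentation satisfying the small-cancellation condition C'(λ), the group G is torsion-free, w is a reduced word whose image in G is not conjugate in G to the image of any word of strictly smaller length, and n is a positive integer. If a word v is a common initial segment of some relator r ∈ R and of the word wⁿ, then |v| < (1/2 + λ)·|r|. -/
/-- Words over the alphabet `X ∪ X⁻¹`: a letter is a pair `(x, b)`,
where `b = true` means `x` and `b = false` means `x⁻¹`. -/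
abbrev Word (X : Type) := List (X × Bool)

/-- The inverse of a letter. -/
def invLetter {X : Type} (a : X × Bool) : X × Bool := (a.1, !a.2)

/-- A word is reduced if it contains no adjacent pair of mutually inverse letters. -/
def Reduced {X : Type} (w : Word X) : Prop :=
  List.Chain' (fun a b => b ≠ invLetter a) w

/-- The formal inverse of a word: reverse the word and invert each letter. -/
def wordInv {X : Type} (w : Word X) : Word X :=
  (w.map invLetter).reverse

/-- The cyclic permutation of a word by `k` letters. -/
def cyclicPerm {X : Type} (w : Word X) (k : ℕ) : Word X :=
  w.drop k ++ w.take k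

/-- The concatenation of `n` copies of a word. -/
def wordPow {X : Type} (w : Word X) (n : ℕ) : Word X :=
  (List.replicate n w).flatten

/-- A set of words is symmetrised if it is closed under taking formal inverses
and cyclic permutations. -/
def Symmetrised {X : Type} (R : Set (Word X)) : Prop :=
  ∀ r ∈ R, wordInv r ∈ R ∧ ∀ k : ℕ, cyclicPerm r k ∈ R

/-- The `C'(λ)` small-cancellation condition (the metric piece condition): for any two
distinct relators `r₁, r₂ ∈ R`, every common initial segment `v` of `r₁` and `r₂`
has length `< λ·|r₁|`. -/
def SmallCancellation {X : Type} (R : Set (Word X)) (lam : ℝ) : Prop :=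
  ∀ r₁ ∈ R, ∀ r₂ ∈ R, r₁ ≠ r₂ →
    ∀ v : Word X, v <+: r₁ → v <+: r₂ → (v.length : ℝ) < lam * r₁.length

/-- A monoid is torsion-free if every non-identity element has infinite order
(the definition of `Monoid.IsTorsionFree` in the older Mathlib). -/
def Monoid.IsTorsionFree (G : Type*) [Monoid G] : Prop :=
  ∀ g : G, g ≠ 1 → ¬IsOfFinOrder g

/- ### Auxiliary lemmas -/

lemma wordPow_succ {X : Type} (u : Word X) (m : ℕ) :
    wordPow u (m + 1) = u ++ wordPow u m := by
  simp [wordPow, List.replicate_succ]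

lemma wordPow_length {X : Type} (u : Word X) (m : ℕ) :
    (wordPow u m).length = m * u.length := by
  induction m with
  | zero => simp [wordPow]
  | succ m ih => rw [wordPow_succ]; simp [ih, Nat.succ_mul]; ring

lemma mk_wordInv {X : Type} (u : Word X) :
    FreeGroup.mk (wordInv u) = (FreeGroup.mk u)⁻¹ := by
  rw [FreeGroup.inv_mk]; rfl

lemma mk_wordPow {X : Type} (u : Word X) (m : ℕ) :
    FreeGroup.mk (wordPow u m) = (FreeGroup.mk u) ^ m := by
  induction m with
  | zero => simp [wordPow, ← FreeGroup.one_eq_mk]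
  | succ m ih => rw [wordPow_succ, ← FreeGroup.mul_mk, ih, pow_succ']

lemma wordInv_length {X : Type} (u : Word X) : (wordInv u).length = u.length := by
  simp [wordInv]

/-- If a positive rotation fixes a list, so does the rotation by the gcd of the
rotation amount and the length. -/
lemma rotate_gcd {α : Type} (r : List α) (k : ℕ) (hn : 0 < r.length)
    (h : r.rotate k = r) : r.rotate (Nat.gcd k r.length) = r := by
  have hmul : ∀ a : ℕ, r.rotate (a * k) = r := by
    intro a; induction a with
    | zero => simp
    | succ a ih => rw [Nat.succ_mul, ← List.rotate_rotate, ih, h]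
  set n := r.length with hnn
  set A : ℤ := Nat.gcdA k n with hA
  set B : ℤ := Nat.gcdB k n with hB
  have hbez : (Nat.gcd k n : ℤ) = k * A + n * B := Nat.gcd_eq_gcd_ab k n
  set a : ℕ := (A % n).toNat with ha
  have hnz : (n : ℤ) ≠ 0 := by exact_mod_cast hn.ne'
  have haz : (a : ℤ) = A % n := Int.toNat_of_nonneg (Int.emod_nonneg A hnz)
  have key : ((a * k : ℕ) : ℤ) % n = ((Nat.gcd k n : ℕ) : ℤ) % n := by
    push_cast
    rw [haz, Int.mul_emod, Int.emod_emod_of_dvd A dvd_rfl, ← Int.mul_emod]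
    rw [show A * k = (Nat.gcd k n : ℤ) + (n : ℤ) * (-B) by linear_combination -hbez]
    rw [Int.add_mul_emod_self_left]
  have keyn : (a * k) % n = Nat.gcd k n % n := by exact_mod_cast key
  calc r.rotate (Nat.gcd k n) = r.rotate (Nat.gcd k n % r.length) := (List.rotate_mod r _).symm
    _ = r.rotate ((a * k) % r.length) := by rw [← hnn, keyn]
    _ = r.rotate (a * k) := List.rotate_mod r _
    _ = r := hmul a

/-- Two commuting words: the longer is a power of the shorter (divisible case). -/
lemma comm_pow {X : Type} (u : Word X) :
    ∀ (m : ℕ) (s : Word X), s.length = m * u.length → u ++ s = s ++ u →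
      s = wordPow u m := by
  intro m
  induction m with
  | zero =>
    intro s hs _
    have : s = [] := List.eq_nil_of_length_eq_zero (by simp [hs])
    simp [this, wordPow]
  | succ m ih =>
    intro s hs hc
    rcases eq_or_ne u [] with rfl | hu
    · have : s = [] := List.eq_nil_of_length_eq_zero (by simp [hs])
      simp [this, wordPow, List.flatten_replicate_nil]
    have hupos : 0 < u.length := List.length_pos_iff.mpr hu
    have hle : u.length ≤ s.length := by rw [hs, Nat.succ_mul]; omega
    have htake : s.take u.length = u := by
      have h1 : (u ++ s).take u.length = (s ++ u).take u.length := by rw [hc]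
      rw [List.take_append_of_le_length le_rfl, List.take_append_of_le_length hle,
        List.take_length] at h1
      exact h1.symm
    have hsplit : s = u ++ s.drop u.length := by
      conv_lhs => rw [← List.take_append_drop u.length s]
      rw [htake]
    have hc' : u ++ s.drop u.length = s.drop u.length ++ u := by
      refine List.append_cancel_left (as := u) ?_
      calc u ++ (u ++ s.drop u.length) = u ++ s := by rw [← hsplit]
        _ = s ++ u := hc
        _ = (u ++ s.drop u.length) ++ u := by rw [← hsplit]
        _ = u ++ (s.drop u.length ++ u) := by rw [List.append_assoc]
    have hlen : (s.drop u.length).length = m * u.length := by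
      rw [List.length_drop, hs, Nat.succ_mul]; omega
    rw [hsplit, ih _ hlen hc', ← wordPow_succ]

/-- A list fixed by a nontrivial rotation dividing its length is a proper power. -/
lemma rotate_period {X : Type} (r : Word X) (d : ℕ) (hd : 0 < d) (hlt : d < r.length)
    (hdvd : d ∣ r.length) (hrot : r.rotate d = r) :
    ∃ t, 2 ≤ t ∧ r = wordPow (r.take d) t := by
  have hle : d ≤ r.length := hlt.le
  have heq : r.drop d ++ r.take d = r := by
    rw [← List.rotate_eq_drop_append_take hle, hrot]
  have hcomm : r.take d ++ r.drop d = r.drop d ++ r.take d := by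
    rw [List.take_append_drop, heq]
  obtain ⟨t, ht⟩ := hdvd
  have ht2 : 2 ≤ t := by
    by_contra hcon
    interval_cases t <;> omega
  have hlen : (r.drop d).length = (t - 1) * (r.take d).length := by
    rw [List.length_drop, List.length_take, min_eq_left hle, ht, Nat.sub_mul, one_mul,
      mul_comm]
  refine ⟨t, ht2, ?_⟩
  have := comm_pow (r.take d) (t - 1) (r.drop d) hlen hcomm
  conv_lhs => rw [← List.take_append_drop d r]
  rw [this, ← wordPow_succ]
  congr 1
  omega

/-- Lemma about powers: there is a constant `λ₀ > 0` such that for every `0 < λ ≤ λ₀` the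
following holds. Suppose `G = ⟨X | R⟩` satisfies `C'(λ)`, `G` is torsion-free, `w` is a
reduced word whose image in `G` is not conjugate to the image of any strictly shorter word,
and `n` is a positive integer. If a word `v` is a common initial segment of a relator
`r ∈ R` and of `wⁿ`, then `|v| < (1/2 + λ)·|r|`. -/
theorem lemma_about_powers :
    ∃ lam₀ : ℝ, 0 < lam₀ ∧ ∀ lam : ℝ, 0 < lam → lam ≤ lam₀ →
      ∀ (X : Type) (R : Set (Word X)),
        (∀ r ∈ R, Reduced r ∧ r ≠ []) →
        Symmetrised R →
        SmallCancellation R lam →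
        Monoid.IsTorsionFree (PresentedGroup (FreeGroup.mk '' R)) →
        ∀ w : Word X, Reduced w →
          (∀ u : Word X, u.length < w.length →
            ¬ IsConj (PresentedGroup.mk (FreeGroup.mk '' R) (FreeGroup.mk w))
                     (PresentedGroup.mk (FreeGroup.mk '' R) (FreeGroup.mk u))) →
          ∀ n : ℕ, 0 < n →
            ∀ r ∈ R, ∀ v : Word X, v <+: r → v <+: wordPow w n →
              (v.length : ℝ) < (1 / 2 + lam) * r.length := by
  refine ⟨1/2, by norm_num, ?_⟩
  intro lam hlam hlam2 X R hR hsym hsc htf w hw hmin n hn r hr v hvr hvw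
  by_contra hcon
  push_neg at hcon
  set φ := PresentedGroup.mk (FreeGroup.mk '' R) with hφ
  have hrne : r ≠ [] := (hR r hr).2
  have hrpos : 0 < r.length := List.length_pos_iff.mpr hrne
  have hrposR : (0 : ℝ) < r.length := by exact_mod_cast hrpos
  have hφr : ∀ s ∈ R, φ (FreeGroup.mk s) = 1 := by
    intro s hs
    have hmem : FreeGroup.mk s ∈ Subgroup.normalClosure (FreeGroup.mk '' R) :=
      Subgroup.subset_normalClosure (Set.mem_image_of_mem _ hs)
    exact (QuotientGroup.eq_one_iff _).mpr hmem
  have key : ∀ u : Word X, u.length < w.length →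
      φ (FreeGroup.mk w) = φ (FreeGroup.mk u) → False := by
    intro u h1 h2
    exact hmin u h1 (h2 ▸ IsConj.refl _)
  have hvle : v.length ≤ r.length := hvr.length_le
  have h2v : r.length < 2 * v.length := by
    have hR2 : (r.length : ℝ) < 2 * v.length := by nlinarith
    exact_mod_cast hR2
  obtain ⟨m, rfl⟩ : ∃ m, n = m + 1 := ⟨n - 1, by omega⟩
  have hwpow : wordPow w (m + 1) = w ++ wordPow w m := wordPow_succ w m
  have hwpre : w <+: wordPow w (m + 1) := by rw [hwpow]; exact List.prefix_append _ _
  rcases le_or_gt v.length w.length with hcase | hcase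
  · -- `v` fits inside `w`: replace `v` by the inverse of the rest of `r`.
    have hv_w : v <+: w := List.prefix_of_prefix_length_le hvw hwpre hcase
    obtain ⟨s, hs⟩ := hv_w
    obtain ⟨t, ht⟩ := hvr
    apply key (wordInv t ++ s)
    · have h1 : t.length = r.length - v.length := by
        have := congrArg List.length ht
        simp at this; omega
      have h2 : s.length = w.length - v.length := by
        have := congrArg List.length hs
        simp at this; omega
      simp only [List.length_append, wordInv_length]
      omega
    · have h1 : φ (FreeGroup.mk v) * φ (FreeGroup.mk t) = 1 := by
        rw [← map_mul, FreeGroup.mul_mk, ht]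
        exact hφr r hr
      have h2 : φ (FreeGroup.mk v) = (φ (FreeGroup.mk t))⁻¹ :=
        eq_inv_of_mul_eq_one_left h1
      rw [← hs, ← FreeGroup.mul_mk, map_mul, ← FreeGroup.mul_mk, map_mul, mk_wordInv,
        map_inv, h2]
  · -- `v` is longer than `w`.
    have hwpos : 0 < w.length := by
      rcases Nat.eq_zero_or_pos w.length with h0 | h
      · exfalso
        have := hvw.length_le
        rw [wordPow_length, h0] at this
        omega
      · exact h
    have hwv : w <+: v := List.prefix_of_prefix_length_le hwpre hvw hcase.le
    have hwr : w <+: r := hwv.trans hvr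
    have hwltr : w.length < r.length := lt_of_lt_of_le hcase hvle
    -- the shifted word v' = v.drop |w|
    have hdropwn : (wordPow w (m + 1)).drop w.length = wordPow w m := by
      rw [hwpow, List.drop_append_of_le_length le_rfl]
      simp
    have hv'wn : v.drop w.length <+: wordPow w (m + 1) := by
      have h1 : v.drop w.length <+: wordPow w m := by
        have := hvw.drop w.length
        rwa [hdropwn] at this
      refine h1.trans ?_
      rw [show wordPow w (m+1) = wordPow w m ++ w from ?_]
      · exact List.prefix_append _ _
      · simp [wordPow, List.replicate_succ']
    have hv'r : v.drop w.length <+: r := by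
      refine (List.prefix_of_prefix_length_le hv'wn hvw ?_).trans hvr
      simp only [List.length_drop]; omega
    have hv'c : v.drop w.length <+: cyclicPerm r w.length :=
      (hvr.drop w.length).trans (List.prefix_append _ _)
    by_cases hrc : r = cyclicPerm r w.length
    · -- periodic case: `r` is a proper power.
      have hrot : r.rotate w.length = r := by
        rw [List.rotate_eq_drop_append_take hwltr.le]
        exact hrc.symm
      set d := Nat.gcd w.length r.length with hd
      have hdpos : 0 < d := Nat.gcd_pos_of_pos_left _ hwpos
      have hddw : d ∣ w.length := Nat.gcd_dvd_left _ _
      have hddr : d ∣ r.length := Nat.gcd_dvd_right _ _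
      have hdw : d ≤ w.length := Nat.le_of_dvd hwpos hddw
      have hdlt : d < r.length := lt_of_le_of_lt hdw hwltr
      have hrotd : r.rotate d = r := rotate_gcd r w.length hrpos hrot
      obtain ⟨t, ht2, hpow⟩ := rotate_period r d hdpos hdlt hddr hrotd
      -- the root maps to 1 by torsion-freeness
      have hz1 : φ (FreeGroup.mk (r.take d)) = 1 := by
        by_contra hne
        apply htf _ hne
        rw [isOfFinOrder_iff_pow_eq_one]
        refine ⟨t, by omega, ?_⟩
        rw [← map_pow, ← mk_wordPow, ← hpow]
        exact hφr r hr
      -- the root is a prefix of `w`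
      have hzw : r.take d = w.take d := by
        have h1 : r.take d = v.take d := by
          rw [List.prefix_iff_eq_take.mp hvr, List.take_take, min_eq_left]
          omega
        have h2 : v.take d = (wordPow w (m+1)).take d := by
          rw [List.prefix_iff_eq_take.mp hvw, List.take_take, min_eq_left]
          omega
        have h3 : (wordPow w (m+1)).take d = w.take d := by
          rw [hwpow, List.take_append_of_le_length hdw]
        rw [h1, h2, h3]
      apply key (w.drop d)
      · simp only [List.length_drop]; omega
      · have hwsplit : w = w.take d ++ w.drop d := (List.take_append_drop d w).symm
        conv_lhs => rw [hwsplit]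
        rw [← FreeGroup.mul_mk, map_mul, ← hzw, hz1, one_mul]
    · -- distinct relators: the C'(λ) condition bounds the overlap.
      have hcR : cyclicPerm r w.length ∈ R := (hsym r hr).2 w.length
      have hlt := hsc r hr _ hcR hrc (v.drop w.length) hv'r hv'c
      have hv'len : ((v.drop w.length).length : ℝ) = (v.length : ℝ) - w.length := by
        rw [List.length_drop]
        push_cast [Nat.cast_sub hcase.le]
        ring
      have h2w : r.length < 2 * w.length := by
        have hwR : (r.length : ℝ) < 2 * w.length := by
          rw [hv'len] at hlt
          nlinarith
        exact_mod_cast hwR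
      obtain ⟨t, ht⟩ := hwr
      apply key (wordInv t)
      · rw [wordInv_length]
        have := congrArg List.length ht
        simp at this
        omega
      · have h1 : φ (FreeGroup.mk w) * φ (FreeGroup.mk t) = 1 := by
          rw [← map_mul, FreeGroup.mul_mk, ht]
          exact hφr r hr
        rw [mk_wordInv, map_inv]
        exact eq_inv_of_mul_eq_one_left h1
end

section
/- In the free group F(a, b) on two generators, a nontrivial commutator cannot be a cube: for all elements x, y, w of F(a, b), if the commutator ⁅x, y⁆ equals w³, then ⁅x, y⁆ = 1. -/
open scoped Classical

open scoped commutatorElement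

/-- The integer Heisenberg group (free nilpotent of class 2 on two generators). -/
@[ext] structure Heis where
  a : ℤ
  b : ℤ
  c : ℤ

namespace Heis

instance : One Heis := ⟨⟨0, 0, 0⟩⟩
instance : Mul Heis := ⟨fun g h => ⟨g.a + h.a, g.b + h.b, g.c + h.c + g.a * h.b⟩⟩
instance : Inv Heis := ⟨fun g => ⟨-g.a, -g.b, -g.c + g.a * g.b⟩⟩

@[simp] lemma one_a : (1 : Heis).a = 0 := rfl
@[simp] lemma one_b : (1 : Heis).b = 0 := rfl
@[simp] lemma one_c : (1 : Heis).c = 0 := rfl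
@[simp] lemma mul_a (g h : Heis) : (g * h).a = g.a + h.a := rfl
@[simp] lemma mul_b (g h : Heis) : (g * h).b = g.b + h.b := rfl
@[simp] lemma mul_c (g h : Heis) : (g * h).c = g.c + h.c + g.a * h.b := rfl
@[simp] lemma inv_a (g : Heis) : (g⁻¹).a = -g.a := rfl
@[simp] lemma inv_b (g : Heis) : (g⁻¹).b = -g.b := rfl
@[simp] lemma inv_c (g : Heis) : (g⁻¹).c = -g.c + g.a * g.b := rfl

instance : Group Heis where
  mul_assoc g h k := by ext <;> simp <;> ring
  one_mul g := by ext <;> simp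
  mul_one g := by ext <;> simp
  inv_mul_cancel g := by ext <;> simp <;> ring

lemma commutator_eq (g h : Heis) :
    ⁅g, h⁆ = ⟨0, 0, g.a * h.b - h.a * g.b⟩ := by
  rw [commutatorElement_def]
  ext <;> simp <;> ring

lemma cube_eq (g : Heis) : g ^ 3 = ⟨3 * g.a, 3 * g.b, 3 * g.c + 3 * (g.a * g.b)⟩ := by
  have h3 : g ^ 3 = g * g * g := by rw [pow_succ, pow_succ, pow_one]
  rw [h3]
  ext <;> simp <;> ring

/-- Projection to the first coordinate, as a group hom. -/
def p1 : Heis →* Multiplicative ℤ where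
  toFun g := Multiplicative.ofAdd g.a
  map_one' := rfl
  map_mul' g h := by simp [ofAdd_add]

/-- Projection to the second coordinate, as a group hom. -/
def p2 : Heis →* Multiplicative ℤ where
  toFun g := Multiplicative.ofAdd g.b
  map_one' := rfl
  map_mul' g h := by simp [ofAdd_add]

@[simp] lemma p1_apply (g : Heis) : p1 g = Multiplicative.ofAdd g.a := rfl
@[simp] lemma p2_apply (g : Heis) : p2 g = Multiplicative.ofAdd g.b := rfl

end Heis

/-- First coordinate of `Multiplicative (ℤ × ℤ)`, as a group hom. -/
def q1 : Multiplicative (ℤ × ℤ) →* Multiplicative ℤ where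
  toFun v := Multiplicative.ofAdd v.toAdd.1
  map_one' := rfl
  map_mul' _ _ := rfl

/-- Second coordinate of `Multiplicative (ℤ × ℤ)`, as a group hom. -/
def q2 : Multiplicative (ℤ × ℤ) →* Multiplicative ℤ where
  toFun v := Multiplicative.ofAdd v.toAdd.2
  map_one' := rfl
  map_mul' _ _ := rfl

@[simp] lemma q1_apply (v : Multiplicative (ℤ × ℤ)) :
    q1 v = Multiplicative.ofAdd v.toAdd.1 := rfl
@[simp] lemma q2_apply (v : Multiplicative (ℤ × ℤ)) :
    q2 v = Multiplicative.ofAdd v.toAdd.2 := rfl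

lemma freeGroup_commute_of_subsingleton {ι : Type*} [Subsingleton ι]
    (u v : FreeGroup ι) : Commute u v := by
  induction u with
  | C1 => exact Commute.one_left v
  | of i =>
    induction v with
    | C1 => exact Commute.one_right _
    | of j => rw [Subsingleton.elim i j]
    | inv_of j hj => exact hj.inv_right
    | mul u v hu hv => exact hu.mul_right hv
  | inv_of i hi => exact hi.inv_left
  | mul u v hu hv => exact hu.mul_left hv

theorem aux_free {G : Type*} [Group G] [IsFreeGroup G] (x y w : G)
    (hgen : Subgroup.closure ({x, y, w} : Set G) = ⊤) (h : ⁅x, y⁆ = w ^ 3) :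
    ⁅x, y⁆ = 1 := by
  rcases subsingleton_or_nontrivial (IsFreeGroup.Generators G) with hs | hn
  · -- the free group is on at most one generator, hence abelian
    have e := IsFreeGroup.toFreeGroup (G := G)
    have key : Commute x y := by
      have hc := (freeGroup_commute_of_subsingleton (e x) (e y)).map
        (e.symm.toMonoidHom)
      simpa using hc
    exact commutatorElement_eq_one_iff_commute.mpr key
  · exfalso
    obtain ⟨i, j, hij⟩ := exists_pair_ne (IsFreeGroup.Generators G)
    -- coordinate homomorphisms
    set π : IsFreeGroup.Generators G → (G →* Multiplicative ℤ) := fun k =>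
      IsFreeGroup.lift (fun l => Multiplicative.ofAdd (if l = k then (1 : ℤ) else 0)) with hπ
    -- w dies in every coordinate of the abelianization
    have hw0 : ∀ k, π k w = 1 := by
      intro k
      have h3 : (π k w) ^ 3 = 1 := by
        rw [← map_pow, ← h, map_commutatorElement]
        exact commutatorElement_eq_one_iff_commute.mpr (Commute.all _ _)
      have h3' := congrArg Multiplicative.toAdd h3
      simp only [toAdd_pow, toAdd_one, nsmul_eq_mul, Nat.cast_ofNat] at h3'
      have h0 : Multiplicative.toAdd (π k w) = 0 := by omega
      have := congrArg Multiplicative.ofAdd h0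
      simpa using this
    -- the Heisenberg homomorphism
    set φ : G →* Heis := IsFreeGroup.lift (fun l =>
      ⟨if l = i then (1 : ℤ) else 0, if l = j then (1 : ℤ) else 0, 0⟩) with hφ
    have hp1 : Heis.p1.comp φ = π i := by
      apply IsFreeGroup.ext_hom
      intro k
      simp [hφ, hπ, IsFreeGroup.lift_of]
    have hp2 : Heis.p2.comp φ = π j := by
      apply IsFreeGroup.ext_hom
      intro k
      simp [hφ, hπ, IsFreeGroup.lift_of]
    have coorda : ∀ g : G, (φ g).a = Multiplicative.toAdd (π i g) := by
      intro g
      have := congrArg Multiplicative.toAdd (DFunLike.congr_fun hp1 g)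
      simpa using this
    have coordb : ∀ g : G, (φ g).b = Multiplicative.toAdd (π j g) := by
      intro g
      have := congrArg Multiplicative.toAdd (DFunLike.congr_fun hp2 g)
      simpa using this
    -- the key mod 3 relation
    have heq : ⁅φ x, φ y⁆ = (φ w) ^ 3 := by
      rw [← map_commutatorElement, ← map_pow, h]
    rw [Heis.commutator_eq, Heis.cube_eq] at heq
    have hwa : (φ w).a = 0 := by rw [coorda, hw0]; rfl
    have hwb : (φ w).b = 0 := by rw [coordb, hw0]; rfl
    have hdet : (φ x).a * (φ y).b - (φ y).a * (φ x).b = 3 * (φ w).c := by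
      have := congrArg Heis.c heq
      simp only at this
      rw [this, hwa, hwb]
      ring
    -- generation: the images of x, y, w generate the two chosen coordinates
    set Φ : G →* Multiplicative (ℤ × ℤ) := IsFreeGroup.lift (fun l =>
      Multiplicative.ofAdd (if l = i then (1 : ℤ) else 0, if l = j then (1 : ℤ) else 0)) with hΦ
    have hq1 : q1.comp Φ = π i := by
      apply IsFreeGroup.ext_hom
      intro k
      simp [hΦ, hπ, IsFreeGroup.lift_of]
    have hq2 : q2.comp Φ = π j := by
      apply IsFreeGroup.ext_hom
      intro k
      simp [hΦ, hπ, IsFreeGroup.lift_of]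
    have coord1 : ∀ g : G, (Multiplicative.toAdd (Φ g)).1 = Multiplicative.toAdd (π i g) := by
      intro g
      have := congrArg Multiplicative.toAdd (DFunLike.congr_fun hq1 g)
      simpa using this
    have coord2 : ∀ g : G, (Multiplicative.toAdd (Φ g)).2 = Multiplicative.toAdd (π j g) := by
      intro g
      have := congrArg Multiplicative.toAdd (DFunLike.congr_fun hq2 g)
      simpa using this
    have hΦw : Φ w = 1 := by
      have h1 : (Multiplicative.toAdd (Φ w)).1 = 0 := by rw [coord1, hw0]; rfl
      have h2 : (Multiplicative.toAdd (Φ w)).2 = 0 := by rw [coord2, hw0]; rfl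
      have : Multiplicative.toAdd (Φ w) = 0 := Prod.ext h1 h2
      have := congrArg Multiplicative.ofAdd this
      simpa using this
    -- every image of Φ lies in the closure of {Φ x, Φ y}
    have hmem : ∀ g : G, Φ g ∈ Subgroup.closure ({Φ x, Φ y} : Set (Multiplicative (ℤ × ℤ))) := by
      intro g
      have hg : Φ g ∈ Subgroup.map Φ (Subgroup.closure ({x, y, w} : Set G)) := by
        rw [hgen]
        exact ⟨g, trivial, rfl⟩
      rw [MonoidHom.map_closure, Set.image_insert_eq, Set.image_insert_eq,
        Set.image_singleton] at hg
      have hsub : ({Φ x, Φ y, Φ w} : Set (Multiplicative (ℤ × ℤ))) ⊆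
          ↑(Subgroup.closure ({Φ x, Φ y} : Set (Multiplicative (ℤ × ℤ)))) := by
        rw [hΦw]
        intro v hv
        rcases hv with rfl | rfl | rfl
        · exact Subgroup.subset_closure (by simp)
        · exact Subgroup.subset_closure (by simp)
        · exact one_mem _
      exact (Subgroup.closure_le _).mpr hsub hg
    -- in particular, the two basis vectors are combinations of Φ x and Φ y
    have hofi : Φ (IsFreeGroup.of i) = Multiplicative.ofAdd ((1 : ℤ), (0 : ℤ)) := by
      rw [hΦ, IsFreeGroup.lift_of]
      simp [hij]
    have hofj : Φ (IsFreeGroup.of j) = Multiplicative.ofAdd ((0 : ℤ), (1 : ℤ)) := by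
      rw [hΦ, IsFreeGroup.lift_of]
      simp [hij, Ne.symm hij]
    obtain ⟨m, n, hmn⟩ := Subgroup.mem_closure_pair.mp (hmem (IsFreeGroup.of i))
    obtain ⟨m', n', hmn'⟩ := Subgroup.mem_closure_pair.mp (hmem (IsFreeGroup.of j))
    rw [hofi] at hmn
    rw [hofj] at hmn'
    -- extract the four scalar equations
    set ξ₁ := Multiplicative.toAdd (π i x)
    set ξ₂ := Multiplicative.toAdd (π j x)
    set η₁ := Multiplicative.toAdd (π i y)
    set η₂ := Multiplicative.toAdd (π j y)
    have hx1 : (Multiplicative.toAdd (Φ x)).1 = ξ₁ := coord1 x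
    have hx2 : (Multiplicative.toAdd (Φ x)).2 = ξ₂ := coord2 x
    have hy1 : (Multiplicative.toAdd (Φ y)).1 = η₁ := coord1 y
    have hy2 : (Multiplicative.toAdd (Φ y)).2 = η₂ := coord2 y
    have e1 := congrArg (fun v => (Multiplicative.toAdd v).1) hmn
    have e2 := congrArg (fun v => (Multiplicative.toAdd v).2) hmn
    have e3 := congrArg (fun v => (Multiplicative.toAdd v).1) hmn'
    have e4 := congrArg (fun v => (Multiplicative.toAdd v).2) hmn'
    simp only [toAdd_mul, toAdd_zpow, Prod.fst_add, Prod.snd_add, Prod.smul_fst, Prod.smul_snd,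
      smul_eq_mul, toAdd_ofAdd, hx1, hx2, hy1, hy2] at e1 e2 e3 e4
    -- the determinant relation
    have hdet' : ξ₁ * η₂ - η₁ * ξ₂ = 3 * (φ w).c := by
      rw [← hdet, coorda, coordb, coorda, coordb]
    have hcontra : (3 : ℤ) ∣ 1 := by
      refine ⟨(m * n' - n * m') * (φ w).c, ?_⟩
      have key : (m * n' - n * m') * (ξ₁ * η₂ - η₁ * ξ₂) = 1 := by
        linear_combination (m * ξ₁ + n * η₁) * e4 + e1 - (m' * ξ₁ + n' * η₁) * e2
      calc (1 : ℤ) = (m * n' - n * m') * (ξ₁ * η₂ - η₁ * ξ₂) := key.symm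
        _ = 3 * ((m * n' - n * m') * (φ w).c) := by rw [hdet']; ring
    norm_num at hcontra

/-- In the free group on two generators, a nontrivial commutator cannot be a cube. -/
theorem commutator_not_cube_in_free_group (x y w : FreeGroup (Fin 2)) :
    ⁅x, y⁆ = w ^ 3 → ⁅x, y⁆ = 1 := by
  intro h
  set H : Subgroup (FreeGroup (Fin 2)) := Subgroup.closure {x, y, w} with hH
  have hx : x ∈ H := Subgroup.subset_closure (by simp)
  have hy : y ∈ H := Subgroup.subset_closure (by simp)
  have hw : w ∈ H := Subgroup.subset_closure (by simp)
  set x' : H := ⟨x, hx⟩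
  set y' : H := ⟨y, hy⟩
  set w' : H := ⟨w, hw⟩
  have hgen : Subgroup.closure ({x', y', w'} : Set H) = ⊤ := by
    have := Subgroup.closure_closure_coe_preimage (k := ({x, y, w} : Set (FreeGroup (Fin 2))))
    rw [← this]
    congr 1
    ext g
    simp only [Set.mem_insert_iff, Set.mem_singleton_iff, Set.mem_preimage]
    constructor
    · rintro (rfl | rfl | rfl)
      · left; rfl
      · right; left; rfl
      · right; right; rfl
    · rintro (h | h | h)
      · exact Or.inl (Subtype.ext h)
      · exact Or.inr (Or.inl (Subtype.ext h))
      · exact Or.inr (Or.inr (Subtype.ext h))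
  have h' : ⁅x', y'⁆ = w' ^ 3 := by
    apply Subtype.ext
    simpa [commutatorElement_def] using h
  have := aux_free x' y' w' hgen h'
  have := congrArg (Subtype.val) this
  simpa [commutatorElement_def] using this
end
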